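/- Let H satisfy the k-th no-resonance condition with eigenbasis {|E⟩}, and let |Ψ₀⟩, |z⟩ be unit vectors with p_avg(z) = Σ_E |⟨z|E⟩⟨E|Ψ₀⟩|² > 0. Define q_z(E) = |⟨z|E⟩⟨E|Ψ₀⟩|²/p_avg(z) and D_β(z)⁻¹ = Σ_E q_z(E)². Then |E_t[p̃(z,t)^k] − k!| ≤ k! · (k choose 2) · D_β(z)⁻¹, where E_t denotes the infinite-time average and p̃(z,t) = |⟨z|e^{-iHt}|Ψ₀⟩|²/p_avg(z). -/

import Mathlib

open Filter
open scoped BigOperators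

/-- The `k`-th no-resonance condition for eigenvalues `E : Fin D → ℝ`. -/
def NoResonance {D : ℕ} (E : Fin D → ℝ) (k : ℕ) : Prop :=
  ∀ α β : Fin k → Fin D,
    (∑ i, E (α i)) = (∑ i, E (β i)) →
    Multiset.map α Finset.univ.val = Multiset.map β Finset.univ.val

/-- `HasTimeAvg f L` : the infinite-time average `lim_{T→∞} (1/T)∫_0^T f(t) dt` equals `L`. -/
def HasTimeAvg (f : ℝ → ℝ) (L : ℝ) : Prop :=
  Tendsto (fun T : ℝ => (1 / T) * ∫ t in (0:ℝ)..T, f t) atTop (nhds L)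

/-- The amplitude `⟨z|e^{-iHt}|Ψ₀⟩ = ∑_j ⟨z|E_j⟩ e^{-iE_j t} ⟨E_j|Ψ₀⟩` in the eigenbasis `v`. -/
noncomputable def amp {D : ℕ} (E : Fin D → ℝ) (v : Fin D → EuclideanSpace ℂ (Fin D))
    (z Ψ₀ : EuclideanSpace ℂ (Fin D)) (t : ℝ) : ℂ :=
  ∑ j, (inner ℂ z (v j) : ℂ) * Complex.exp (-Complex.I * (E j : ℂ) * (t : ℂ)) *
    (inner ℂ (v j) Ψ₀ : ℂ)

/-- `p_avg(z) = ∑_E |⟨z|E⟩⟨E|Ψ₀⟩|²`. -/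
noncomputable def pavg {D : ℕ} (v : Fin D → EuclideanSpace ℂ (Fin D))
    (z Ψ₀ : EuclideanSpace ℂ (Fin D)) : ℝ :=
  ∑ j, ‖(inner ℂ z (v j) : ℂ) * (inner ℂ (v j) Ψ₀ : ℂ)‖ ^ 2

/-- `q_z(E) = |⟨z|E⟩⟨E|Ψ₀⟩|² / p_avg(z)`. -/
noncomputable def qz {D : ℕ} (v : Fin D → EuclideanSpace ℂ (Fin D))
    (z Ψ₀ : EuclideanSpace ℂ (Fin D)) (j : Fin D) : ℝ :=
  ‖(inner ℂ z (v j) : ℂ) * (inner ℂ (v j) Ψ₀ : ℂ)‖ ^ 2 / pavg v z Ψ₀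

/-! ### Auxiliary analytic lemmas -/

lemma timeAvg_exp (ω : ℝ) :
    Tendsto (fun T : ℝ => (1 / (T:ℂ)) * ∫ t in (0:ℝ)..T, Complex.exp (Complex.I * ω * t)) atTop
      (nhds (if ω = 0 then 1 else 0)) := by
  by_cases hω : ω = 0
  · simp only [hω, if_pos rfl]
    have h : ∀ᶠ T : ℝ in atTop, (1:ℂ)
        = (1 / (T:ℂ)) * (∫ t in (0:ℝ)..T, Complex.exp (Complex.I * (0:ℝ) * t)) := by
      filter_upwards [eventually_gt_atTop (0:ℝ)] with T hT
      simp only [Complex.ofReal_zero, mul_zero, zero_mul, Complex.exp_zero]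
      rw [intervalIntegral.integral_const]
      simp only [sub_zero, Complex.real_smul, mul_one]
      rw [one_div, inv_mul_cancel₀ (by exact_mod_cast hT.ne')]
    exact Tendsto.congr' h tendsto_const_nhds
  · simp only [if_neg hω]
    have hc : (Complex.I * ω : ℂ) ≠ 0 := by
      simp [Complex.I_ne_zero, Complex.ofReal_ne_zero, hω]
    apply squeeze_zero_norm' (a := fun T : ℝ => (1/T) * (2 / ‖Complex.I * ω‖))
    · filter_upwards [eventually_gt_atTop (0:ℝ)] with T hT
      have : (∫ t in (0:ℝ)..T, Complex.exp (Complex.I * ω * t))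
          = (Complex.exp (Complex.I * ω * T) - Complex.exp (Complex.I * ω * 0))
            / (Complex.I * ω) := by
        simpa [mul_assoc] using integral_exp_mul_complex (a := 0) (b := T) hc
      rw [this, norm_mul, norm_div]
      have h1 : ‖Complex.exp (Complex.I * ω * T) - Complex.exp (Complex.I * ω * 0)‖ ≤ 2 := by
        refine (norm_sub_le _ _).trans ?_
        have e1 : ‖Complex.exp (Complex.I * ω * T)‖ = 1 := by
          have : Complex.I * ω * T = ((ω * T : ℝ) : ℂ) * Complex.I := by push_cast; ring
          rw [this, Complex.norm_exp_ofReal_mul_I]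
        have e2 : ‖Complex.exp (Complex.I * ω * 0)‖ = 1 := by
          have : Complex.I * ω * 0 = ((ω * 0 : ℝ) : ℂ) * Complex.I := by push_cast; ring
          rw [this, Complex.norm_exp_ofReal_mul_I]
        rw [e1, e2]; norm_num
      have h3 : ‖(T:ℂ)‖ = T := by
        simp [abs_of_pos hT]
      rw [norm_one, h3, div_mul_eq_mul_div, one_mul, div_mul_eq_mul_div,
        one_mul, div_div]
      rw [norm_div, div_div]
      gcongr
    · have h0 : Tendsto (fun T : ℝ => 1/T) atTop (nhds 0) := by
        simpa only [one_div] using tendsto_inv_atTop_zero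
      simpa using h0.mul_const (2 / ‖Complex.I * ω‖)

lemma timeAvg_sum {ι : Type*} [Fintype ι] (c : ι → ℂ) (ω : ι → ℝ) :
    Tendsto (fun T : ℝ => (1/(T:ℂ)) *
        ∫ t in (0:ℝ)..T, ∑ p, c p * Complex.exp (Complex.I * ω p * t))
      atTop (nhds (∑ p, if ω p = 0 then c p else 0)) := by
  have hcont : ∀ p : ι, Continuous (fun t : ℝ => c p * Complex.exp (Complex.I * ω p * t)) := by
    intro p; fun_prop
  have key : ∀ T : ℝ, (1/(T:ℂ)) * ∫ t in (0:ℝ)..T, ∑ p, c p * Complex.exp (Complex.I * ω p * t)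
      = ∑ p, c p * ((1/(T:ℂ)) * ∫ t in (0:ℝ)..T, Complex.exp (Complex.I * ω p * t)) := by
    intro T
    rw [intervalIntegral.integral_finset_sum
      (fun p _ => (hcont p).intervalIntegrable 0 T)]
    rw [Finset.mul_sum]
    refine Finset.sum_congr rfl fun p _ => ?_
    rw [intervalIntegral.integral_const_mul]
    ring
  simp only [key]
  refine tendsto_finset_sum _ fun p _ => ?_
  have := (timeAvg_exp (ω p)).const_mul (c p)
  simpa [mul_ite, mul_one, mul_zero] using this

/-! ### Auxiliary combinatorial lemmas -/

lemma map_univ_succ {n : ℕ} {γ : Type*} (f : Fin (n+1) → γ) :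
    Multiset.map f Finset.univ.val = f 0 ::ₘ Multiset.map (f ∘ Fin.succ) Finset.univ.val := by
  rw [Fin.univ_succ, Finset.cons_val, Multiset.map_cons,
    Finset.map_val, Multiset.map_map]
  rfl

lemma exists_comp_perm {D : ℕ} : ∀ {k : ℕ} (α β : Fin k → Fin D),
    Multiset.map α Finset.univ.val = Multiset.map β Finset.univ.val →
    ∃ σ : Equiv.Perm (Fin k), β = α ∘ σ := by
  intro k
  induction k with
  | zero => exact fun α β _ => ⟨1, funext fun x => x.elim0⟩
  | succ n ih =>
    intro α β h
    have hb0 : β 0 ∈ Multiset.map α Finset.univ.val := by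
      rw [h]
      exact Multiset.mem_map.2 ⟨0, Finset.mem_univ_val _, rfl⟩
    obtain ⟨i, -, hi⟩ := Multiset.mem_map.1 hb0
    set α' : Fin (n+1) → Fin D := α ∘ (Equiv.swap 0 i) with hα'def
    have hα' : Multiset.map α' Finset.univ.val = Multiset.map α Finset.univ.val := by
      rw [hα'def]
      rw [show (α ∘ ⇑(Equiv.swap 0 i)) = α ∘ ⇑(Equiv.swap 0 i) from rfl,
        ← Multiset.map_map α (⇑(Equiv.swap 0 i)), Multiset.map_univ_val_equiv]
    have h0 : α' 0 = β 0 := by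
      simp only [hα'def, Function.comp_apply, Equiv.swap_apply_left, hi]
    have htail : Multiset.map (α' ∘ Fin.succ) Finset.univ.val
        = Multiset.map (β ∘ Fin.succ) Finset.univ.val := by
      have h2 := hα'.trans h
      rw [map_univ_succ α', map_univ_succ β, h0] at h2
      exact (Multiset.cons_inj_right _).1 h2
    obtain ⟨σ', hσ'⟩ := ih _ _ htail
    refine ⟨(Equiv.Perm.decomposeFin.symm (0, σ')).trans (Equiv.swap 0 i), ?_⟩
    funext x
    simp only [Function.comp_apply, Equiv.trans_apply]
    refine Fin.cases ?_ ?_ x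
    · rw [Equiv.Perm.decomposeFin_symm_apply_zero]
      rw [Equiv.swap_apply_left]
      exact hi.symm
    · intro j
      rw [Equiv.Perm.decomposeFin_symm_apply_succ]
      have : Equiv.swap (0 : Fin (n+1)) 0 = Equiv.refl _ := Equiv.swap_self 0
      rw [this, Equiv.refl_apply]
      have := congrFun hσ' j
      simpa [hα'def] using this

lemma multiset_comp_perm {k D : ℕ} (α : Fin k → Fin D) (σ : Equiv.Perm (Fin k)) :
    Multiset.map (α ∘ σ) Finset.univ.val = Multiset.map α Finset.univ.val := by
  rw [← Multiset.map_map α (⇑σ), Multiset.map_univ_val_equiv]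

lemma card_multiset_eq_le {k D : ℕ} (α : Fin k → Fin D) [DecidableEq (Fin k → Fin D)] :
    (Finset.univ.filter fun β : Fin k → Fin D =>
        Multiset.map α Finset.univ.val = Multiset.map β Finset.univ.val).card
      ≤ k.factorial := by
  classical
  have hsub : (Finset.univ.filter fun β : Fin k → Fin D =>
        Multiset.map α Finset.univ.val = Multiset.map β Finset.univ.val)
      ⊆ (Finset.univ : Finset (Equiv.Perm (Fin k))).image
          (fun σ : Equiv.Perm (Fin k) => α ∘ ⇑σ) := by
    intro β hβ
    obtain ⟨σ, hσ⟩ := exists_comp_perm α β (Finset.mem_filter.1 hβ).2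
    exact Finset.mem_image.2 ⟨σ, Finset.mem_univ _, hσ.symm⟩
  refine (Finset.card_le_card hsub).trans (Finset.card_image_le.trans ?_)
  rw [Finset.card_univ, Fintype.card_perm, Fintype.card_fin]

lemma le_card_multiset_eq {k D : ℕ} {α : Fin k → Fin D} (hα : Function.Injective α)
    [DecidableEq (Fin k → Fin D)] :
    k.factorial ≤ (Finset.univ.filter fun β : Fin k → Fin D =>
        Multiset.map α Finset.univ.val = Multiset.map β Finset.univ.val).card := by
  classical
  have hinj : Function.Injective (fun σ : Equiv.Perm (Fin k) => α ∘ ⇑σ) := by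
    intro σ τ h
    exact Equiv.ext fun x => hα (congrFun h x)
  have hsub : (Finset.univ : Finset (Equiv.Perm (Fin k))).image
        (fun σ : Equiv.Perm (Fin k) => α ∘ ⇑σ)
      ⊆ (Finset.univ.filter fun β : Fin k → Fin D =>
        Multiset.map α Finset.univ.val = Multiset.map β Finset.univ.val) := by
    intro β hβ
    obtain ⟨σ, -, rfl⟩ := Finset.mem_image.1 hβ
    exact Finset.mem_filter.2 ⟨Finset.mem_univ _, (multiset_comp_perm α σ).symm⟩
  have := Finset.card_le_card hsub
  rwa [Finset.card_image_of_injective _ hinj, Finset.card_univ, Fintype.card_perm,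
    Fintype.card_fin] at this

lemma marg {k D : ℕ} (q : Fin D → ℝ) (hs : ∑ j, q j = 1)
    {i i' : Fin k} (hii : i ≠ i') :
    ∑ α : Fin k → Fin D, (if α i = α i' then ∏ l, q (α l) else 0) = ∑ j, q j ^ 2 := by
  classical
  have step1 : ∀ α : Fin k → Fin D,
      (if α i = α i' then ∏ l, q (α l) else 0)
        = ∑ j, (if α i = j ∧ α i' = j then ∏ l, q (α l) else 0) := by
    intro α
    rw [Finset.sum_eq_single (α i)]
    · by_cases h : α i = α i'
      · simp [h]
      · rw [if_neg h, if_neg (fun hc : _ ∧ _ => h hc.2.symm)]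
    · intro b _ hb
      rw [if_neg (fun hc : _ ∧ _ => hb hc.1.symm)]
    · simp
  simp only [step1]
  rw [Finset.sum_comm]
  refine Finset.sum_congr rfl fun j _ => ?_
  have step2 : ∀ α : Fin k → Fin D,
      (if α i = j ∧ α i' = j then ∏ l, q (α l) else 0)
        = ∏ l, (if l = i ∨ l = i' then (if α l = j then q (α l) else 0) else q (α l)) := by
    intro α
    by_cases h : α i = j ∧ α i' = j
    · rw [if_pos h]
      refine (Finset.prod_congr rfl fun l _ => ?_).symm
      by_cases hl : l = i ∨ l = i'
      · rcases hl with hl | hl <;> simp [hl, h.1, h.2]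
      · simp [hl]
    · rw [if_neg h]
      rcases not_and_or.1 h with h1 | h1
      · exact (Finset.prod_eq_zero (Finset.mem_univ i) (by simp [h1])).symm
      · exact (Finset.prod_eq_zero (Finset.mem_univ i') (by simp [h1])).symm
  simp only [step2]
  rw [← Fintype.prod_sum (fun l m => if l = i ∨ l = i' then (if m = j then q m else 0) else q m)]
  have step3 : ∀ l : Fin k,
      (∑ m, if l = i ∨ l = i' then (if m = j then q m else 0) else q m)
        = (if l = i ∨ l = i' then q j else 1) := by
    intro l
    by_cases hl : l = i ∨ l = i'
    · simp [hl]
    · simp [hl, hs]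
  simp only [step3]
  have : (Finset.univ.filter (fun l : Fin k => l = i ∨ l = i')) = {i, i'} := by
    ext l; simp
  rw [Finset.prod_ite, Finset.prod_const, Finset.prod_const_one, mul_one, this,
    Finset.card_pair hii]

lemma noninj_bound {k D : ℕ} (q : Fin D → ℝ) (hq : ∀ j, 0 ≤ q j) (hs : ∑ j, q j = 1) :
    ∑ α : Fin k → Fin D, (if ¬ Function.Injective α then ∏ l, q (α l) else 0)
      ≤ (k.choose 2 : ℝ) * ∑ j, q j ^ 2 := by
  classical
  have hQ : ∀ α : Fin k → Fin D, 0 ≤ ∏ l, q (α l) :=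
    fun α => Finset.prod_nonneg fun l _ => hq _
  have key : (2:ℝ) * ∑ α : Fin k → Fin D, (if ¬ Function.Injective α then ∏ l, q (α l) else 0)
      ≤ ∑ p ∈ Finset.univ.offDiag (α := Fin k),
          ∑ α : Fin k → Fin D, (if α p.1 = α p.2 then ∏ l, q (α l) else 0) := by
    rw [Finset.mul_sum, Finset.sum_comm]
    refine Finset.sum_le_sum fun α _ => ?_
    by_cases h : Function.Injective α
    · simp only [h, not_true_eq_false, if_false, mul_zero]
      refine Finset.sum_nonneg fun p _ => ?_
      by_cases hc : α p.1 = α p.2 <;> simp [hc, hQ α]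
    · simp only [h, not_false_eq_true, if_true]
      obtain ⟨a, b, hab, hne⟩ := Function.not_injective_iff.1 h
      have hsub : ({(a,b), (b,a)} : Finset (Fin k × Fin k)) ⊆ Finset.univ.offDiag := by
        intro p hp
        simp only [Finset.mem_insert, Finset.mem_singleton] at hp
        rcases hp with rfl | rfl
        · exact Finset.mem_offDiag.2 ⟨Finset.mem_univ _, Finset.mem_univ _, hne⟩
        · exact Finset.mem_offDiag.2 ⟨Finset.mem_univ _, Finset.mem_univ _, hne.symm⟩
      calc (2:ℝ) * ∏ l, q (α l)
          = ∑ p ∈ ({(a,b), (b,a)} : Finset (Fin k × Fin k)),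
              (if α p.1 = α p.2 then ∏ l, q (α l) else 0) := by
            rw [Finset.sum_pair (by simp [hne])]
            simp only [if_pos hab, if_pos hab.symm]; ring
        _ ≤ _ := Finset.sum_le_sum_of_subset_of_nonneg hsub
              (fun p _ _ => by by_cases hc : α p.1 = α p.2 <;> simp [hc, hQ α])
  have hcard : ((Finset.univ.offDiag (α := Fin k)).card : ℝ) = 2 * (k.choose 2 : ℝ) := by
    rw [Finset.offDiag_card, Finset.card_univ, Fintype.card_fin]
    have h1 : 2 * k.choose 2 = k * (k - 1) := by
      rw [Nat.choose_two_right, Nat.mul_div_cancel' (Nat.even_mul_pred_self k).two_dvd]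
    have h2 : k * k - k = k * (k - 1) := by
      rw [← Nat.pred_eq_sub_one, Nat.mul_pred]
    rw [h2, ← h1]
    push_cast
    ring
  have key2 : ∑ p ∈ Finset.univ.offDiag (α := Fin k),
      ∑ α : Fin k → Fin D, (if α p.1 = α p.2 then ∏ l, q (α l) else 0)
      = 2 * (k.choose 2 : ℝ) * ∑ j, q j ^ 2 := by
    rw [Finset.sum_congr rfl (fun p hp => marg q hs
      (Finset.mem_offDiag.1 hp).2.2), Finset.sum_const, nsmul_eq_mul, hcard]
  rw [key2] at key
  nlinarith [Finset.sum_nonneg (fun j (_ : j ∈ Finset.univ) => sq_nonneg (q j))]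

/-- The purely combinatorial estimate. -/
lemma bound_part {D k : ℕ} (q : Fin D → ℝ) (hq0 : ∀ j, 0 ≤ q j) (hqs : ∑ j, q j = 1)
    (N : (Fin k → Fin D) → ℕ)
    (hNle : ∀ γ : Fin k → Fin D, (N γ : ℝ) ≤ k.factorial)
    (hNeq : ∀ γ : Fin k → Fin D, Function.Injective γ → (N γ : ℝ) = k.factorial) :
    |(∑ γ : Fin k → Fin D, (N γ : ℝ) * ∏ i, q (γ i)) - (k.factorial : ℝ)|
      ≤ (k.factorial : ℝ) * (k.choose 2) * ∑ j, q j ^ 2 := by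
  classical
  have hQ0 : ∀ γ : Fin k → Fin D, 0 ≤ ∏ i, q (γ i) :=
    fun γ => Finset.prod_nonneg fun i _ => hq0 _
  have hQsum : ∑ γ : Fin k → Fin D, ∏ i, q (γ i) = 1 := by
    rw [← Fintype.sum_pow, hqs, one_pow]
  have hfact : (k.factorial : ℝ) = ∑ γ : Fin k → Fin D, (k.factorial : ℝ) * ∏ i, q (γ i) := by
    rw [← Finset.mul_sum, hQsum, mul_one]
  have hdiff : (k.factorial : ℝ) - (∑ γ : Fin k → Fin D, (N γ : ℝ) * ∏ i, q (γ i))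
      = ∑ γ : Fin k → Fin D, ((k.factorial : ℝ) - N γ) * ∏ i, q (γ i) := by
    conv_lhs => rw [hfact]
    rw [← Finset.sum_sub_distrib]
    exact Finset.sum_congr rfl fun γ _ => by ring
  have h1 : 0 ≤ (k.factorial : ℝ) - (∑ γ : Fin k → Fin D, (N γ : ℝ) * ∏ i, q (γ i)) := by
    rw [hdiff]
    exact Finset.sum_nonneg fun γ _ => mul_nonneg (sub_nonneg.2 (hNle γ)) (hQ0 γ)
  have h2 : (k.factorial : ℝ) - (∑ γ : Fin k → Fin D, (N γ : ℝ) * ∏ i, q (γ i))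
      ≤ (k.factorial : ℝ) *
          ∑ γ : Fin k → Fin D, (if ¬ Function.Injective γ then ∏ l, q (γ l) else 0) := by
    rw [hdiff, Finset.mul_sum]
    refine Finset.sum_le_sum fun γ _ => ?_
    by_cases hγ : Function.Injective γ
    · rw [if_neg (not_not_intro hγ), hNeq γ hγ]
      simp
    · rw [if_pos hγ]
      refine mul_le_mul_of_nonneg_right ?_ (hQ0 γ)
      have : (0:ℝ) ≤ (N γ : ℝ) := Nat.cast_nonneg _
      linarith
  have h3 := noninj_bound (k := k) q hq0 hqs
  have habs : |(∑ γ : Fin k → Fin D, (N γ : ℝ) * ∏ i, q (γ i)) - (k.factorial : ℝ)|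
      = (k.factorial : ℝ) - (∑ γ : Fin k → Fin D, (N γ : ℝ) * ∏ i, q (γ i)) := by
    rw [abs_sub_comm, abs_of_nonneg h1]
  rw [habs, mul_assoc]
  exact h2.trans (mul_le_mul_of_nonneg_left h3 (Nat.cast_nonneg _))

lemma expand_pow {D k : ℕ} (c : Fin D → ℂ) (E : Fin D → ℝ) (t : ℝ) :
    (∑ j, c j * Complex.exp (-(Complex.I * (E j : ℂ) * t))) ^ k *
      (∑ j, (starRingEnd ℂ) (c j) * Complex.exp (Complex.I * (E j : ℂ) * t)) ^ k
    = ∑ p : (Fin k → Fin D) × (Fin k → Fin D),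
        ((∏ i, c (p.1 i)) * (∏ i, (starRingEnd ℂ) (c (p.2 i)))) *
          Complex.exp (Complex.I * (((∑ i, E (p.2 i)) - (∑ i, E (p.1 i)) : ℝ) : ℂ) * t) := by
  rw [Fintype.sum_pow, Fintype.sum_pow, Finset.sum_mul_sum, Fintype.sum_prod_type]
  refine Finset.sum_congr rfl fun α _ => Finset.sum_congr rfl fun β _ => ?_
  rw [Finset.prod_mul_distrib, Finset.prod_mul_distrib, ← Complex.exp_sum, ← Complex.exp_sum]
  have e1 : ∀ γ : Fin k → Fin D, ∑ i, Complex.I * (E (γ i) : ℂ) * t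
      = Complex.I * ((∑ i, E (γ i) : ℝ) : ℂ) * t := by
    intro γ
    push_cast
    rw [Finset.mul_sum, Finset.sum_mul]
  have e2 : ∑ i, -(Complex.I * (E (α i) : ℂ) * t)
      = -(Complex.I * ((∑ i, E (α i) : ℝ) : ℂ) * t) := by
    rw [Finset.sum_neg_distrib, e1]
  have e3 : Complex.I * (((∑ i, E (β i)) - (∑ i, E (α i)) : ℝ) : ℂ) * t
      = Complex.I * ((∑ i, E (β i) : ℝ) : ℂ) * t
        + -(Complex.I * ((∑ i, E (α i) : ℝ) : ℂ) * t) := by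
    push_cast; ring
  rw [e2, e1 β, e3, Complex.exp_add]
  ring

lemma conj_sum_exp {D : ℕ} (c : Fin D → ℂ) (E : Fin D → ℝ) (t : ℝ) :
    (starRingEnd ℂ) (∑ j, c j * Complex.exp (-(Complex.I * (E j : ℂ) * t)))
      = ∑ j, (starRingEnd ℂ) (c j) * Complex.exp (Complex.I * (E j : ℂ) * t) := by
  rw [map_sum]
  refine Finset.sum_congr rfl fun j _ => ?_
  rw [map_mul, ← Complex.exp_conj]
  congr 1
  simp [map_neg, map_mul, Complex.conj_I, Complex.conj_ofReal]

/-- **Temporal Porter–Thomas distribution.** If `H` satisfies the `k`-th no-resonance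
condition, the temporal `k`-th moment of `p̃(z,t) = p(z,t)/p_avg(z)` exists and deviates from
`k!` by at most `k!·(k choose 2)·D_β(z)⁻¹`, where `D_β(z)⁻¹ = ∑_E q_z(E)²`. -/
theorem temporal_porter_thomas {D : ℕ} (k : ℕ) (E : Fin D → ℝ) (hE : NoResonance E k)
    (v : Fin D → EuclideanSpace ℂ (Fin D)) (hv : Orthonormal ℂ v)
    (z Ψ₀ : EuclideanSpace ℂ (Fin D)) (hz : ‖z‖ = 1) (hΨ : ‖Ψ₀‖ = 1)
    (hpos : 0 < pavg v z Ψ₀) :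
    ∃ L : ℝ,
      HasTimeAvg (fun t => (‖amp E v z Ψ₀ t‖ ^ 2 / pavg v z Ψ₀) ^ k) L ∧
      |L - (k.factorial : ℝ)| ≤
        (k.factorial : ℝ) * (k.choose 2) * (∑ j, (qz v z Ψ₀ j) ^ 2) := by
  classical
  set P : ℝ := pavg v z Ψ₀ with hP
  have hP0 : P ≠ 0 := ne_of_gt hpos
  set c : Fin D → ℂ := fun j => (inner ℂ z (v j) : ℂ) * (inner ℂ (v j) Ψ₀ : ℂ) with hc
  set Cp : (Fin k → Fin D) × (Fin k → Fin D) → ℂ :=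
    fun p => (∏ i, c (p.1 i)) * (∏ i, (starRingEnd ℂ) (c (p.2 i))) with hCp
  set W : (Fin k → Fin D) × (Fin k → Fin D) → ℝ :=
    fun p => (∑ i, E (p.2 i)) - (∑ i, E (p.1 i)) with hW
  set h : ℝ → ℝ := fun t => (‖amp E v z Ψ₀ t‖ ^ 2) ^ k with hh
  -- pointwise expansion
  have hamp : ∀ t : ℝ, amp E v z Ψ₀ t = ∑ j, c j * Complex.exp (-(Complex.I * (E j : ℂ) * t)) := by
    intro t
    unfold amp
    exact Finset.sum_congr rfl fun j _ => by rw [hc]; ring_nf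
  have hpoint : ∀ t : ℝ, ((h t : ℝ) : ℂ)
      = ∑ p, Cp p * Complex.exp (Complex.I * (W p : ℂ) * t) := by
    intro t
    have h1 : ((‖amp E v z Ψ₀ t‖ ^ 2 : ℝ) : ℂ)
        = amp E v z Ψ₀ t * (starRingEnd ℂ) (amp E v z Ψ₀ t) := by
      rw [Complex.sq_norm, Complex.mul_conj]
    calc ((h t : ℝ) : ℂ)
        = ((‖amp E v z Ψ₀ t‖ ^ 2 : ℝ) : ℂ) ^ k := by
          rw [hh]; push_cast; ring
      _ = (amp E v z Ψ₀ t) ^ k * ((starRingEnd ℂ) (amp E v z Ψ₀ t)) ^ k := by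
          rw [h1, mul_pow]
      _ = ∑ p, Cp p * Complex.exp (Complex.I * (W p : ℂ) * t) := by
          rw [hamp t, conj_sum_exp, expand_pow]
  -- existence of the time average
  set Lc : ℂ := ∑ p, if W p = 0 then Cp p else 0 with hLcdef
  have key := timeAvg_sum Cp W
  have key2 : Tendsto (fun T : ℝ => (((1/T) * ∫ t in (0:ℝ)..T, h t : ℝ) : ℂ))
      atTop (nhds Lc) := by
    have heq : (fun T : ℝ => (((1/T) * ∫ t in (0:ℝ)..T, h t : ℝ) : ℂ))
        = fun T : ℝ => (1/(T:ℂ)) *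
            ∫ t in (0:ℝ)..T, ∑ p, Cp p * Complex.exp (Complex.I * (W p : ℂ) * t) := by
      funext T
      have : (∫ t in (0:ℝ)..T, ∑ p, Cp p * Complex.exp (Complex.I * (W p : ℂ) * t))
          = ((∫ t in (0:ℝ)..T, h t : ℝ) : ℂ) := by
        rw [← intervalIntegral.integral_ofReal]
        exact intervalIntegral.integral_congr fun t _ => (hpoint t).symm
      rw [this]
      push_cast
      ring
    rw [heq]
    exact key
  have hhavg : HasTimeAvg h Lc.re := by
    have := (Complex.continuous_re.tendsto Lc).comp key2
    simpa only [HasTimeAvg, Function.comp_def, Complex.ofReal_re] using this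
  refine ⟨Lc.re / P^k, ?_, ?_⟩
  · -- the time average statement
    unfold HasTimeAvg
    have heqT : ∀ T : ℝ, (1/T) * ∫ t in (0:ℝ)..T, (‖amp E v z Ψ₀ t‖ ^ 2 / P) ^ k
        = ((1/T) * ∫ t in (0:ℝ)..T, h t) * (P^k)⁻¹ := by
      intro T
      have : (fun t => (‖amp E v z Ψ₀ t‖ ^ 2 / P) ^ k)
          = fun t => h t * (P^k)⁻¹ := by
        funext t
        rw [hh, div_pow, div_eq_mul_inv]
      rw [this, intervalIntegral.integral_mul_const]
      ring
    refine Tendsto.congr (fun T => (heqT T).symm) ?_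
    rw [div_eq_mul_inv]
    exact hhavg.mul_const _
  · -- the numerical bound
    set q : Fin D → ℝ := fun j => Complex.normSq (c j) / P with hq
    have hqz : ∀ j, qz v z Ψ₀ j = q j := by
      intro j
      rw [hq]
      unfold qz
      rw [Complex.sq_norm, hc, ← hP]
    have hq0 : ∀ j, 0 ≤ q j := fun j => div_nonneg (Complex.normSq_nonneg _) hpos.le
    have hqs : ∑ j, q j = 1 := by
      rw [hq, ← Finset.sum_div]
      have : ∑ j, Complex.normSq (c j) = P := by
        rw [hP]
        unfold pavg
        exact Finset.sum_congr rfl fun j _ => by rw [hc, Complex.sq_norm]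
      rw [this, div_self hP0]
    -- identify Lc.re
    set M : (Fin k → Fin D) → Multiset (Fin D) :=
      fun γ => Multiset.map γ Finset.univ.val with hM
    have hsumM : ∀ γ : Fin k → Fin D, ∑ i, E (γ i) = ((M γ).map E).sum := by
      intro γ
      rw [hM, Multiset.map_map, Finset.sum_eq_multiset_sum]
      rfl
    have hprodM : ∀ (f : Fin D → ℂ) (γ : Fin k → Fin D), ∏ i, f (γ i) = ((M γ).map f).prod := by
      intro f γ
      rw [hM, Multiset.map_map, Finset.prod_eq_multiset_prod]
      rfl
    have hWM : ∀ p : (Fin k → Fin D) × (Fin k → Fin D), (W p = 0) ↔ (M p.1 = M p.2) := by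
      intro p
      constructor
      · intro h0
        have h0' : (∑ i, E (p.2 i)) - (∑ i, E (p.1 i)) = 0 := h0
        exact hE p.1 p.2 (sub_eq_zero.1 h0').symm
      · intro hm
        have hsums : ∑ i, E (p.1 i) = ∑ i, E (p.2 i) := by rw [hsumM, hsumM, hm]
        show (∑ i, E (p.2 i)) - (∑ i, E (p.1 i)) = 0
        rw [← hsums, sub_self]
    have hLc2 : Lc = (((∑ p : (Fin k → Fin D) × (Fin k → Fin D),
        if M p.1 = M p.2 then (∏ i, Complex.normSq (c (p.1 i))) else 0) : ℝ) : ℂ) := by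
      rw [hLcdef, Complex.ofReal_sum]
      refine Finset.sum_congr rfl fun p _ => ?_
      by_cases hm : M p.1 = M p.2
      · rw [if_pos ((hWM p).2 hm), apply_ite Complex.ofReal, if_pos hm]
        have hprod : ∏ i, c (p.2 i) = ∏ i, c (p.1 i) := by
          rw [hprodM, hprodM, hm]
        rw [hCp]
        calc (∏ i, c (p.1 i)) * (∏ i, (starRingEnd ℂ) (c (p.2 i)))
            = (∏ i, c (p.1 i)) * (starRingEnd ℂ) (∏ i, c (p.2 i)) := by rw [map_prod]
          _ = (∏ i, c (p.1 i)) * (starRingEnd ℂ) (∏ i, c (p.1 i)) := by rw [hprod]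
          _ = ((Complex.normSq (∏ i, c (p.1 i)) : ℝ) : ℂ) := by rw [Complex.mul_conj]
          _ = (((∏ i, Complex.normSq (c (p.1 i))) : ℝ) : ℂ) := by rw [map_prod]
      · rw [if_neg (fun h0 => hm ((hWM p).1 h0)), apply_ite Complex.ofReal, if_neg hm]
        simp
    have hLre : Lc.re = ∑ p : (Fin k → Fin D) × (Fin k → Fin D),
        if M p.1 = M p.2 then (∏ i, Complex.normSq (c (p.1 i))) else 0 := by
      rw [hLc2, Complex.ofReal_re]
    -- rewrite L as ∑ N γ * Q γ
    set N : (Fin k → Fin D) → ℕ :=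
      fun γ => (Finset.univ.filter fun β : Fin k → Fin D => M γ = M β).card with hN
    have hLval : Lc.re / P^k = ∑ γ : Fin k → Fin D, (N γ : ℝ) * ∏ i, q (γ i) := by
      rw [hLre, Finset.sum_div, Fintype.sum_prod_type]
      refine Finset.sum_congr rfl fun γ _ => ?_
      show ∑ β : Fin k → Fin D,
          (if M γ = M β then (∏ i, Complex.normSq (c (γ i))) else 0) / P^k
        = (N γ : ℝ) * ∏ i, q (γ i)
      have hQreview : ∀ β : Fin k → Fin D,
          (if M γ = M β then (∏ i, Complex.normSq (c (γ i))) else 0) / P^k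
          = if M γ = M β then (∏ i, q (γ i)) else 0 := by
        intro β
        by_cases hm : M γ = M β
        · rw [if_pos hm, if_pos hm, hq]
          rw [Finset.prod_div_distrib, Finset.prod_const, Finset.card_univ, Fintype.card_fin]
        · rw [if_neg hm, if_neg hm, zero_div]
      calc ∑ β : Fin k → Fin D,
              (if M γ = M β then (∏ i, Complex.normSq (c (γ i))) else 0) / P^k
          = ∑ β : Fin k → Fin D, (if M γ = M β then (∏ i, q (γ i)) else 0) :=
            Finset.sum_congr rfl fun β _ => hQreview β
        _ = (N γ : ℝ) * ∏ i, q (γ i) := by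
            rw [← Finset.sum_filter, Finset.sum_const, nsmul_eq_mul, hN]
    rw [hLval]
    have hNle : ∀ γ : Fin k → Fin D, (N γ : ℝ) ≤ k.factorial := by
      intro γ
      exact_mod_cast card_multiset_eq_le γ
    have hNeq : ∀ γ : Fin k → Fin D, Function.Injective γ → (N γ : ℝ) = k.factorial := by
      intro γ hγ
      exact_mod_cast le_antisymm (card_multiset_eq_le γ) (le_card_multiset_eq hγ)
    have hfin := bound_part q hq0 hqs N hNle hNeq
    have : ∑ j, (qz v z Ψ₀ j) ^ 2 = ∑ j, q j ^ 2 :=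
      Finset.sum_congr rfl fun j _ => by rw [hqz j]
    rw [this]
    exact hfin
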